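/- arXiv:1609.04064 — 2 statements merged into one kernel-verified Lean document; each statement's English description precedes it below -/
import Mathlib

section
/- For n ≥ 5, the fifth derivative of the Chebyshev polynomial satisfies T_n^{(5)}(x) = Σ (1/(192 c_l)) · n (n² − (l−3)²)(n² − (l−1)²)(n² − (l+1)²)(n² − (l+3)²) T_l(x), where the sum runs over l from 0 to n−5 with n + l odd, and c_0 = 2, c_l = 1 for l ≥ 1. -/
open Polynomial Polynomial.Chebyshev

noncomputable def c : ℕ → ℝ := fun l => if l = 0 then 2 else 1

lemma c_ne_zero (l : ℕ) : c l ≠ 0 := by unfold c; split_ifs <;> norm_num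

lemma c_pos (l : ℕ) (h : l ≠ 0) : c l = 1 := by unfold c; simp [h]

noncomputable def a1 (n l : ℕ) : ℝ := 2*(n:ℝ)/c l
noncomputable def a2 (n l : ℕ) : ℝ := (n:ℝ)*((n:ℝ)^2-(l:ℝ)^2)/c l
noncomputable def a3 (n l : ℕ) : ℝ :=
  (n:ℝ)*((n:ℝ)^2-((l:ℝ)-1)^2)*((n:ℝ)^2-((l:ℝ)+1)^2)/(4*c l)
noncomputable def a4 (n l : ℕ) : ℝ :=
  (n:ℝ)*((n:ℝ)^2-((l:ℝ)-2)^2)*((n:ℝ)^2-(l:ℝ)^2)*((n:ℝ)^2-((l:ℝ)+2)^2)/(24*c l)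
noncomputable def a5 (n l : ℕ) : ℝ :=
  (1 / (192 * c l)) * n * ((n : ℝ) ^ 2 - ((l : ℝ) - 3) ^ 2)
    * ((n : ℝ) ^ 2 - ((l : ℝ) - 1) ^ 2) * ((n : ℝ) ^ 2 - ((l : ℝ) + 1) ^ 2)
    * ((n : ℝ) ^ 2 - ((l : ℝ) + 3) ^ 2)

lemma UU (n : ℤ) : U ℝ (n+1) - U ℝ (n-1) = 2 * T ℝ (n+1) := by
  have h : T ℝ (n+1) = U ℝ (n+1) - X * U ℝ n := by
    simpa using T_eq_U_sub_X_mul_U ℝ (n+1)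
  linear_combination -2*h - U_add_one ℝ n

lemma B (n : ℤ) : C (n:ℝ) * derivative (T ℝ (n+2)) =
    C ((n:ℝ)+2) * derivative (T ℝ n) + C (2*(n:ℝ)*((n:ℝ)+2)) * T ℝ (n+1) := by
  have h1 : derivative (T ℝ (n+2)) = ((n+2 : ℤ) : ℝ[X]) * U ℝ (n+1) := by
    have := T_derivative_eq_U (R := ℝ) (n+2)
    rwa [show n+2-1 = n+1 by ring] at this
  have h2 := T_derivative_eq_U (R := ℝ) n
  have h3 := UU n
  rw [h1, h2]
  push_cast
  simp only [map_add, map_mul, C_eq_intCast, map_ofNat, map_one, C_1]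
  push_cast
  linear_combination ((n:ℝ[X])*((n:ℝ[X])+2)) * h3

lemma iter_add (k : ℕ) (p q : ℝ[X]) :
    derivative^[k] (p + q) = derivative^[k] p + derivative^[k] q := by
  induction k generalizing p q with
  | zero => rfl
  | succ k ih => simp [Function.iterate_succ_apply, derivative_add, ih]

lemma Bk (k : ℕ) (n : ℤ) : C (n:ℝ) * derivative^[k+1] (T ℝ (n+2)) =
    C ((n:ℝ)+2) * derivative^[k+1] (T ℝ n)
      + C (2*(n:ℝ)*((n:ℝ)+2)) * derivative^[k] (T ℝ (n+1)) := by
  have h := congrArg (derivative^[k]) (B n)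
  rw [iter_add, Polynomial.iterate_derivative_C_mul, Polynomial.iterate_derivative_C_mul,
    Polynomial.iterate_derivative_C_mul] at h
  simp only [Function.iterate_succ_apply]
  exact h

lemma filter_odd_congr (s : Finset ℕ) (a b : ℕ) (h : a % 2 = b % 2) :
    s.filter (fun l => Odd (a+l)) = s.filter (fun l => Odd (b+l)) := by
  apply Finset.filter_congr; intro x _; simp only [Nat.odd_iff]; omega

lemma filter_even_odd (s : Finset ℕ) (a b : ℕ) (h : (a + b) % 2 = 1) :
    s.filter (fun l => Even (a+l)) = s.filter (fun l => Odd (b+l)) := by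
  apply Finset.filter_congr; intro x _; simp only [Nat.even_iff, Nat.odd_iff]; omega

lemma cancelC (a : ℝ) (ha : a ≠ 0) {p q : ℝ[X]} (h : C a * p = C a * q) : p = q :=
  mul_left_cancel₀ (by simpa using ha) h

lemma hT3 : T ℝ 3 = 4*X^3 - 3*X := by
  have h := T_add_two ℝ 1
  norm_num [T_two, T_one] at h
  linear_combination h

lemma hT4 : T ℝ 4 = 8*X^4 - 8*X^2 + 1 := by
  have h := T_add_two ℝ 2
  norm_num [T_two, hT3] at h
  linear_combination h

lemma hT5 : T ℝ 5 = 16*X^5 - 20*X^3 + 5*X := by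
  have h := T_add_two ℝ 3
  norm_num [hT3, hT4] at h
  linear_combination h

lemma hd2 : derivative^[2] ((2*X^2 - 1 : ℝ[X])) = C 4 := by
  simp only [Function.iterate_succ_apply', Function.iterate_zero_apply, derivative_sub,
    derivative_add, derivative_mul, derivative_X_pow, derivative_ofNat, derivative_X,
    derivative_one, map_ofNat]
  norm_num [← C_mul]
  norm_num [map_ofNat]

lemma hd3 : derivative^[3] ((4*X^3 - 3*X : ℝ[X])) = C 24 := by
  simp only [Function.iterate_succ_apply', Function.iterate_zero_apply, derivative_sub,
    derivative_add, derivative_mul, derivative_X_pow, derivative_ofNat, derivative_X,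
    derivative_one, map_ofNat]
  norm_num [← C_mul]
  norm_num [map_ofNat]

set_option maxHeartbeats 800000 in
lemma hd4 : derivative^[4] ((8*X^4 - 8*X^2 + 1 : ℝ[X])) = C 192 := by
  simp only [Function.iterate_succ_apply', Function.iterate_zero_apply, derivative_sub,
    derivative_add, derivative_mul, derivative_X_pow, derivative_ofNat, derivative_X,
    derivative_one, map_ofNat]
  norm_num [← C_mul]
  norm_num [map_ofNat]

set_option maxHeartbeats 800000 in
lemma hd5 : derivative^[5] ((16*X^5 - 20*X^3 + 5*X : ℝ[X])) = C 1920 := by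
  simp only [Function.iterate_succ_apply', Function.iterate_zero_apply, derivative_sub,
    derivative_add, derivative_mul, derivative_X_pow, derivative_ofNat, derivative_X,
    derivative_one, map_ofNat]
  norm_num [← C_mul]
  norm_num [map_ofNat]

lemma D1 (n : ℕ) : derivative (T ℝ n) =
    ∑ l ∈ (Finset.range n).filter (fun l => Odd (n + l)), C (a1 n l) * T ℝ l := by
  induction n using Nat.strong_induction_on with
  | _ n ih =>
    match n with
    | 0 => simp
    | 1 =>
      rw [Finset.sum_filter, Finset.sum_range_succ]
      norm_num [T_one, T_zero, a1, c]
    | 2 =>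
      rw [Finset.sum_filter, Finset.sum_range_succ, Finset.sum_range_succ]
      norm_num [T_two, T_one, a1, c, Nat.odd_iff, map_ofNat]
      ring
    | (m+3) =>
      have ih1 := ih (m+1) (by omega)
      apply cancelC ((m:ℝ)+1) (by positivity)
      have key := B ((m:ℤ)+1)
      rw [show (m:ℤ)+1+2 = (m:ℤ)+3 by ring, show (m:ℤ)+1+1 = (m:ℤ)+2 by ring] at key
      have hbig : ∑ l ∈ (Finset.range (m+3)).filter (fun l => Odd (m+3+l)), C (a1 (m+3) l) * T ℝ l
          = (∑ l ∈ (Finset.range (m+1)).filter (fun l => Odd (m+1+l)), C (a1 (m+3) l) * T ℝ l)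
            + C (a1 (m+3) (m+2)) * T ℝ ((m+2 : ℕ) : ℤ) := by
        rw [filter_odd_congr _ (m+3) (m+1) (by omega)]
        simp only [Finset.sum_filter]
        rw [Finset.sum_range_succ, Finset.sum_range_succ]
        rw [if_neg (by simp only [Nat.odd_iff]; omega), if_pos (by simp only [Nat.odd_iff]; omega)]
        rw [add_zero]
      push_cast at key ih1 ⊢
      rw [key, ih1, hbig, mul_add (C ((m:ℝ)+1))]
      congr 1
      · rw [Finset.mul_sum, Finset.mul_sum]
        apply Finset.sum_congr rfl
        intro l hl
        rw [← mul_assoc, ← mul_assoc, ← Polynomial.C_mul, ← Polynomial.C_mul]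
        congr 2
        unfold a1
        field_simp
        push_cast
        ring
      · push_cast
        have h2 : a1 (m+3) (m+2) = 2*((m:ℝ)+3) := by
          unfold a1; rw [c_pos _ (by omega)]; push_cast; ring
        rw [h2, show 2*((m:ℝ)+1)*((m:ℝ)+1+2) = ((m:ℝ)+1) * (2*((m:ℝ)+3)) from by ring, Polynomial.C_mul, mul_assoc]

set_option maxHeartbeats 1600000 in
lemma D2 (n : ℕ) : derivative^[2] (T ℝ n) =
    ∑ l ∈ (Finset.range (n-1)).filter (fun l => Even (n + l)), C (a2 n l) * T ℝ l := by
  induction n using Nat.strong_induction_on with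
  | _ n ih =>
    match n with
    | 0 =>
      have h0 : derivative^[2] (T ℝ (0:ℕ)) = 0 := by
        rw [show ((0:ℕ):ℤ) = (0:ℤ) from by norm_num, T_zero]
        exact Polynomial.iterate_derivative_eq_zero
          (lt_of_le_of_lt (by compute_degree) (by norm_num))
      rw [h0, show (0:ℕ)-1 = 0 from rfl]
      simp
    | 1 =>
      have h0 : derivative^[2] (T ℝ (1:ℕ)) = 0 := by
        rw [show ((1:ℕ):ℤ) = (1:ℤ) from by norm_num, T_one]
        exact Polynomial.iterate_derivative_eq_zero
          (lt_of_le_of_lt (by compute_degree) (by norm_num))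
      rw [h0, show (1:ℕ)-1 = 0 from rfl]
      simp
    | 2 =>
      rw [show ((2:ℕ):ℤ) = (2:ℤ) from by norm_num, T_two, hd2,
        show (2:ℕ)-1 = 1 from rfl, Finset.sum_filter, Finset.sum_range_succ]
      norm_num [a2, c, Nat.odd_iff, Nat.even_iff, T_zero]
    | (m+3) =>
      have ih2 := ih (m+1) (by omega)
      have hprev := D1 (m+2)
      rw [show m+1-1 = m from by omega, filter_even_odd _ (m+1) m (by omega)] at ih2
      rw [filter_odd_congr _ (m+2) m (by omega)] at hprev
      have hbig : (∑ l ∈ (Finset.range m).filter (fun l => Odd (m+l)), C (a2 (m+1) l) * T ℝ l)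
          = ∑ l ∈ (Finset.range (m+2)).filter (fun l => Odd (m+l)), C (a2 (m+1) l) * T ℝ l := by
        apply Finset.sum_subset
        · exact Finset.filter_subset_filter _ (by rw [Finset.range_subset_range]; omega)
        · intro x hx hnx
          simp only [Finset.mem_filter, Finset.mem_range, Nat.odd_iff] at hx hnx
          have hx1 : x = m+1 := by omega
          subst hx1
          have hz : a2 (m+1) (m+1) = 0 := by
            unfold a2; rw [c_pos _ (by omega)]; push_cast; ring
          rw [hz]
          simp
      rw [hbig] at ih2
      apply cancelC ((m:ℝ)+1) (by positivity)
      have key := Bk 1 ((m:ℤ)+1)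
      rw [show (m:ℤ)+1+2 = (m:ℤ)+3 by ring, show (m:ℤ)+1+1 = (m:ℤ)+2 by ring] at key
      simp only [Function.iterate_one] at key
      push_cast at key ih2 hprev ⊢
      rw [key, ih2, hprev]
      rw [filter_even_odd _ (m+3) m (by omega)]
      rw [Finset.mul_sum, Finset.mul_sum, Finset.mul_sum, ← Finset.sum_add_distrib]
      apply Finset.sum_congr rfl
      intro l hl
      simp only [← mul_assoc]
      simp only [← Polynomial.C_mul]
      rw [← add_mul, ← C_add]
      refine congrArg (fun z => C z * T ℝ (l:ℤ)) ?_
      unfold a2 a1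
      field_simp
      push_cast
      ring

set_option maxHeartbeats 1600000 in
lemma D3 (n : ℕ) : derivative^[3] (T ℝ n) =
    ∑ l ∈ (Finset.range (n-2)).filter (fun l => Odd (n + l)), C (a3 n l) * T ℝ l := by
  induction n using Nat.strong_induction_on with
  | _ n ih =>
    match n with
    | 0 =>
      have h0 : derivative^[3] (T ℝ (0:ℕ)) = 0 := by
        rw [show ((0:ℕ):ℤ) = (0:ℤ) from by norm_num, T_zero]
        exact Polynomial.iterate_derivative_eq_zero
          (lt_of_le_of_lt (by compute_degree) (by norm_num))
      rw [h0, show (0:ℕ)-2 = 0 from rfl]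
      simp
    | 1 =>
      have h0 : derivative^[3] (T ℝ (1:ℕ)) = 0 := by
        rw [show ((1:ℕ):ℤ) = (1:ℤ) from by norm_num, T_one]
        exact Polynomial.iterate_derivative_eq_zero
          (lt_of_le_of_lt (by compute_degree) (by norm_num))
      rw [h0, show (1:ℕ)-2 = 0 from rfl]
      simp
    | 2 =>
      have h0 : derivative^[3] (T ℝ (2:ℕ)) = 0 := by
        rw [show ((2:ℕ):ℤ) = (2:ℤ) from by norm_num, T_two]
        exact Polynomial.iterate_derivative_eq_zero
          (lt_of_le_of_lt (by compute_degree) (by norm_num))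
      rw [h0, show (2:ℕ)-2 = 0 from rfl]
      simp
    | 3 =>
      rw [show ((3:ℕ):ℤ) = (3:ℤ) from by norm_num, hT3, hd3,
        show (3:ℕ)-2 = 1 from rfl, Finset.sum_filter, Finset.sum_range_succ]
      norm_num [a3, c, Nat.odd_iff, Nat.even_iff, T_zero]
    | (m+4) =>
      have ih2 := ih (m+2) (by omega)
      have hprev := D2 (m+3)
      rw [show m+2-2 = m from by omega, filter_odd_congr _ (m+2) m (by omega)] at ih2
      rw [show m+3-1 = m+2 from by omega, filter_even_odd _ (m+3) m (by omega)] at hprev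
      have hbig : (∑ l ∈ (Finset.range m).filter (fun l => Odd (m+l)), C (a3 (m+2) l) * T ℝ l)
          = ∑ l ∈ (Finset.range (m+2)).filter (fun l => Odd (m+l)), C (a3 (m+2) l) * T ℝ l := by
        apply Finset.sum_subset
        · exact Finset.filter_subset_filter _ (by rw [Finset.range_subset_range]; omega)
        · intro x hx hnx
          simp only [Finset.mem_filter, Finset.mem_range, Nat.odd_iff] at hx hnx
          have hx1 : x = m+1 := by omega
          subst hx1
          have hz : a3 (m+2) (m+1) = 0 := by
            unfold a3; rw [c_pos _ (by omega)]; push_cast; ring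
          rw [hz]
          simp
      rw [hbig] at ih2
      apply cancelC ((m:ℝ)+2) (by positivity)
      have key := Bk 2 ((m:ℤ)+2)
      rw [show (m:ℤ)+2+2 = (m:ℤ)+4 by ring, show (m:ℤ)+2+1 = (m:ℤ)+3 by ring] at key
      push_cast at key ih2 hprev ⊢
      rw [key, ih2, hprev]
      rw [filter_odd_congr _ (m+4) m (by omega)]
      rw [Finset.mul_sum, Finset.mul_sum, Finset.mul_sum, ← Finset.sum_add_distrib]
      apply Finset.sum_congr rfl
      intro l hl
      simp only [← mul_assoc]
      simp only [← Polynomial.C_mul]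
      rw [← add_mul, ← C_add]
      refine congrArg (fun z => C z * T ℝ (l:ℤ)) ?_
      unfold a3 a2
      field_simp
      push_cast
      ring

set_option maxHeartbeats 1600000 in
lemma D4 (n : ℕ) : derivative^[4] (T ℝ n) =
    ∑ l ∈ (Finset.range (n-3)).filter (fun l => Even (n + l)), C (a4 n l) * T ℝ l := by
  induction n using Nat.strong_induction_on with
  | _ n ih =>
    match n with
    | 0 =>
      have h0 : derivative^[4] (T ℝ (0:ℕ)) = 0 := by
        rw [show ((0:ℕ):ℤ) = (0:ℤ) from by norm_num, T_zero]
        exact Polynomial.iterate_derivative_eq_zero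
          (lt_of_le_of_lt (by compute_degree) (by norm_num))
      rw [h0, show (0:ℕ)-3 = 0 from rfl]
      simp
    | 1 =>
      have h0 : derivative^[4] (T ℝ (1:ℕ)) = 0 := by
        rw [show ((1:ℕ):ℤ) = (1:ℤ) from by norm_num, T_one]
        exact Polynomial.iterate_derivative_eq_zero
          (lt_of_le_of_lt (by compute_degree) (by norm_num))
      rw [h0, show (1:ℕ)-3 = 0 from rfl]
      simp
    | 2 =>
      have h0 : derivative^[4] (T ℝ (2:ℕ)) = 0 := by
        rw [show ((2:ℕ):ℤ) = (2:ℤ) from by norm_num, T_two]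
        exact Polynomial.iterate_derivative_eq_zero
          (lt_of_le_of_lt (by compute_degree) (by norm_num))
      rw [h0, show (2:ℕ)-3 = 0 from rfl]
      simp
    | 3 =>
      have h0 : derivative^[4] (T ℝ (3:ℕ)) = 0 := by
        rw [show ((3:ℕ):ℤ) = (3:ℤ) from by norm_num, hT3]
        exact Polynomial.iterate_derivative_eq_zero
          (lt_of_le_of_lt (by compute_degree) (by norm_num))
      rw [h0, show (3:ℕ)-3 = 0 from rfl]
      simp
    | 4 =>
      rw [show ((4:ℕ):ℤ) = (4:ℤ) from by norm_num, hT4, hd4,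
        show (4:ℕ)-3 = 1 from rfl, Finset.sum_filter, Finset.sum_range_succ]
      norm_num [a4, c, Nat.odd_iff, Nat.even_iff, T_zero]
    | (m+5) =>
      have ih2 := ih (m+3) (by omega)
      have hprev := D3 (m+4)
      rw [show m+3-3 = m from by omega, filter_even_odd _ (m+3) m (by omega)] at ih2
      rw [show m+4-2 = m+2 from by omega, filter_odd_congr _ (m+4) m (by omega)] at hprev
      have hbig : (∑ l ∈ (Finset.range m).filter (fun l => Odd (m+l)), C (a4 (m+3) l) * T ℝ l)
          = ∑ l ∈ (Finset.range (m+2)).filter (fun l => Odd (m+l)), C (a4 (m+3) l) * T ℝ l := by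
        apply Finset.sum_subset
        · exact Finset.filter_subset_filter _ (by rw [Finset.range_subset_range]; omega)
        · intro x hx hnx
          simp only [Finset.mem_filter, Finset.mem_range, Nat.odd_iff] at hx hnx
          have hx1 : x = m+1 := by omega
          subst hx1
          have hz : a4 (m+3) (m+1) = 0 := by
            unfold a4; rw [c_pos _ (by omega)]; push_cast; ring
          rw [hz]
          simp
      rw [hbig] at ih2
      apply cancelC ((m:ℝ)+3) (by positivity)
      have key := Bk 3 ((m:ℤ)+3)
      rw [show (m:ℤ)+3+2 = (m:ℤ)+5 by ring, show (m:ℤ)+3+1 = (m:ℤ)+4 by ring] at key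
      push_cast at key ih2 hprev ⊢
      rw [key, ih2, hprev]
      rw [filter_even_odd _ (m+5) m (by omega)]
      rw [Finset.mul_sum, Finset.mul_sum, Finset.mul_sum, ← Finset.sum_add_distrib]
      apply Finset.sum_congr rfl
      intro l hl
      simp only [← mul_assoc]
      simp only [← Polynomial.C_mul]
      rw [← add_mul, ← C_add]
      refine congrArg (fun z => C z * T ℝ (l:ℤ)) ?_
      unfold a4 a3
      field_simp
      push_cast
      ring

set_option maxHeartbeats 1600000 in
lemma D5 (n : ℕ) : derivative^[5] (T ℝ n) =
    ∑ l ∈ (Finset.range (n-4)).filter (fun l => Odd (n + l)), C (a5 n l) * T ℝ l := by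
  induction n using Nat.strong_induction_on with
  | _ n ih =>
    match n with
    | 0 =>
      have h0 : derivative^[5] (T ℝ (0:ℕ)) = 0 := by
        rw [show ((0:ℕ):ℤ) = (0:ℤ) from by norm_num, T_zero]
        exact Polynomial.iterate_derivative_eq_zero
          (lt_of_le_of_lt (by compute_degree) (by norm_num))
      rw [h0, show (0:ℕ)-4 = 0 from rfl]
      simp
    | 1 =>
      have h0 : derivative^[5] (T ℝ (1:ℕ)) = 0 := by
        rw [show ((1:ℕ):ℤ) = (1:ℤ) from by norm_num, T_one]
        exact Polynomial.iterate_derivative_eq_zero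
          (lt_of_le_of_lt (by compute_degree) (by norm_num))
      rw [h0, show (1:ℕ)-4 = 0 from rfl]
      simp
    | 2 =>
      have h0 : derivative^[5] (T ℝ (2:ℕ)) = 0 := by
        rw [show ((2:ℕ):ℤ) = (2:ℤ) from by norm_num, T_two]
        exact Polynomial.iterate_derivative_eq_zero
          (lt_of_le_of_lt (by compute_degree) (by norm_num))
      rw [h0, show (2:ℕ)-4 = 0 from rfl]
      simp
    | 3 =>
      have h0 : derivative^[5] (T ℝ (3:ℕ)) = 0 := by
        rw [show ((3:ℕ):ℤ) = (3:ℤ) from by norm_num, hT3]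
        exact Polynomial.iterate_derivative_eq_zero
          (lt_of_le_of_lt (by compute_degree) (by norm_num))
      rw [h0, show (3:ℕ)-4 = 0 from rfl]
      simp
    | 4 =>
      have h0 : derivative^[5] (T ℝ (4:ℕ)) = 0 := by
        rw [show ((4:ℕ):ℤ) = (4:ℤ) from by norm_num, hT4]
        exact Polynomial.iterate_derivative_eq_zero
          (lt_of_le_of_lt (by compute_degree) (by norm_num))
      rw [h0, show (4:ℕ)-4 = 0 from rfl]
      simp
    | 5 =>
      rw [show ((5:ℕ):ℤ) = (5:ℤ) from by norm_num, hT5, hd5,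
        show (5:ℕ)-4 = 1 from rfl, Finset.sum_filter, Finset.sum_range_succ]
      norm_num [a5, c, Nat.odd_iff, Nat.even_iff, T_zero]
    | (m+6) =>
      have ih2 := ih (m+4) (by omega)
      have hprev := D4 (m+5)
      rw [show m+4-4 = m from by omega, filter_odd_congr _ (m+4) m (by omega)] at ih2
      rw [show m+5-3 = m+2 from by omega, filter_even_odd _ (m+5) m (by omega)] at hprev
      have hbig : (∑ l ∈ (Finset.range m).filter (fun l => Odd (m+l)), C (a5 (m+4) l) * T ℝ l)
          = ∑ l ∈ (Finset.range (m+2)).filter (fun l => Odd (m+l)), C (a5 (m+4) l) * T ℝ l := by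
        apply Finset.sum_subset
        · exact Finset.filter_subset_filter _ (by rw [Finset.range_subset_range]; omega)
        · intro x hx hnx
          simp only [Finset.mem_filter, Finset.mem_range, Nat.odd_iff] at hx hnx
          have hx1 : x = m+1 := by omega
          subst hx1
          have hz : a5 (m+4) (m+1) = 0 := by
            unfold a5; rw [c_pos _ (by omega)]; push_cast; ring
          rw [hz]
          simp
      rw [hbig] at ih2
      apply cancelC ((m:ℝ)+4) (by positivity)
      have key := Bk 4 ((m:ℤ)+4)
      rw [show (m:ℤ)+4+2 = (m:ℤ)+6 by ring, show (m:ℤ)+4+1 = (m:ℤ)+5 by ring] at key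
      push_cast at key ih2 hprev ⊢
      rw [key, ih2, hprev]
      rw [filter_odd_congr _ (m+6) m (by omega)]
      rw [Finset.mul_sum, Finset.mul_sum, Finset.mul_sum, ← Finset.sum_add_distrib]
      apply Finset.sum_congr rfl
      intro l hl
      simp only [← mul_assoc]
      simp only [← Polynomial.C_mul]
      rw [← add_mul, ← C_add]
      refine congrArg (fun z => C z * T ℝ (l:ℤ)) ?_
      unfold a5 a4
      field_simp
      push_cast
      ring

theorem chebyshev_deriv_five (n : ℕ) (hn : 5 ≤ n) :
    Polynomial.derivative^[5] (T ℝ n) =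
      ∑ l ∈ (Finset.range (n - 4)).filter (fun l => Odd (n + l)),
        Polynomial.C ((1 / (192 * c l)) * n * ((n : ℝ) ^ 2 - ((l : ℝ) - 3) ^ 2)
          * ((n : ℝ) ^ 2 - ((l : ℝ) - 1) ^ 2) * ((n : ℝ) ^ 2 - ((l : ℝ) + 1) ^ 2)
          * ((n : ℝ) ^ 2 - ((l : ℝ) + 3) ^ 2)) * T ℝ l := by
  have h := D5 n
  unfold a5 at h
  exact h
end

section
/- (General derivative formula) For all m ≥ 1 and n ≥ m, the m-th derivative of the Chebyshev polynomial satisfies T_n^{(m)}(x) = Σ_l [ (n / c_l) · (1/((m−1)! · 2^{m−2})) · Π_{i} (n² − (l+i)²) ] T_l(x), where l ranges over 0 ≤ l ≤ n − m with n + l + m even, and the product runs over i ∈ {2−m, 4−m, …, m−4, m−2} (step 2; empty product taken as 1 when m = 1, with the convention that 1/((m−1)! 2^{m−2}) = 2 when m = 1); here c_0 = 2 and c_l = 1 for l ≥ 1. -/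
open Polynomial Polynomial.Chebyshev

noncomputable def pF (n m : ℕ) (x : ℝ) : ℝ :=
  ∏ j ∈ Finset.range m, ((n:ℝ)^2 - (x - m + 1 + 2*j)^2)

section Aux
open Finset

lemma pF_peelA (n m : ℕ) (x : ℝ) :
    pF n (m+1) (x+1) = pF n m x * ((n:ℝ)^2 - (x+1+m)^2) := by
  unfold pF
  rw [Finset.prod_range_succ]
  congr 1
  · apply Finset.prod_congr rfl; intro j _; push_cast; ring_nf
  · push_cast; ring_nf

lemma pF_peelB (n m : ℕ) (x : ℝ) :
    pF n (m+1) (x-1) = pF n m x * ((n:ℝ)^2 - (x-1-m)^2) := by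
  unfold pF
  rw [Finset.prod_range_succ']
  congr 1
  · apply Finset.prod_congr rfl; intro j _; push_cast; ring_nf
  · push_cast; ring_nf

lemma pF_diff (n m : ℕ) (x : ℝ) :
    pF n (m+1) (x-1) - pF n (m+1) (x+1) = pF n m x * (4*(m+1)*x) := by
  rw [pF_peelA, pF_peelB]; ring

lemma pF_top (n m : ℕ) (hm : 1 ≤ m) : pF n m ((n:ℝ) - m + 1) = 0 := by
  unfold pF
  apply Finset.prod_eq_zero (Finset.mem_range.mpr (Nat.sub_lt hm Nat.one_pos))
  have : ((m - 1 : ℕ) : ℝ) = (m : ℝ) - 1 := by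
    have := Nat.cast_sub (R := ℝ) hm; push_cast at this ⊢; linarith
  rw [this]; ring
lemma C_two : Polynomial.C (2:ℝ) = 2 := by
  rw [show (2:ℝ) = ((2:ℕ):ℝ) by norm_num, Polynomial.C_eq_natCast]; norm_num

lemma U_step (n : ℤ) : U ℝ (n + 2) = U ℝ n + 2 * T ℝ (n + 2) := by
  have h1 := U_add_two ℝ n
  have h2 := T_eq_U_sub_X_mul_U ℝ (n + 2)
  have h3 : (n : ℤ) + 2 - 1 = n + 1 := by ring
  rw [h3] at h2
  linear_combination -h1 - 2 * h2

lemma U_sum : ∀ n : ℕ, U ℝ n =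
    ∑ l ∈ Finset.range (n+1), (if Even (n + l) then Polynomial.C (2 / c l) * T ℝ l else 0)
  | 0 => by
      simp [c, U_zero, T_zero]
  | 1 => by
      simp [Finset.sum_range_succ, c, Nat.even_iff, U_one, T_one]
      norm_num [_root_.C_two]
  | (n+2) => by
      have ih := U_sum n
      have key : ((n : ℤ) + 2) = ((n + 2 : ℕ) : ℤ) := by push_cast; ring
      have h := U_step (n : ℤ)
      rw [key] at h
      have e1 : ¬ Even ((n+2) + (n+1)) := by simp [Nat.even_iff]; omega
      have e2 : Even ((n+2) + (n+2)) := by simp [Nat.even_iff]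
      have e3 : ∀ l ∈ Finset.range (n+1),
          (if Even ((n+2) + l) then Polynomial.C (2 / c l) * T ℝ l else 0) =
          (if Even (n + l) then Polynomial.C (2 / c l) * T ℝ l else 0) := by
        intro l _
        congr 1
        simp only [eq_iff_iff, Nat.even_iff]
        omega
      conv_rhs => rw [Finset.sum_range_succ, Finset.sum_range_succ]
      rw [if_neg e1, if_pos e2, add_zero, Finset.sum_congr rfl e3, ← ih, h]
      have : c (n+2) = 1 := by simp [c]
      rw [this]
      norm_num [_root_.C_two]

lemma deriv_T_sum (l : ℕ) : derivative (T ℝ l) =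
    ∑ k ∈ Finset.range l,
      (if Even (l + k + 1) then Polynomial.C ((l:ℝ) * (2 / c k)) * T ℝ k else 0) := by
  cases l with
  | zero => simp
  | succ l' =>
    rw [T_derivative_eq_U]
    have h1 : ((l'+1 : ℕ) : ℤ) - 1 = ((l' : ℕ) : ℤ) := by push_cast; ring
    rw [h1, U_sum l', Finset.mul_sum]
    apply Finset.sum_congr rfl
    intro k hk
    rw [mul_ite, mul_zero]
    have h2 : (Even (l' + k)) = (Even (l' + 1 + k + 1)) := by
      simp only [eq_iff_iff, Nat.even_iff]; omega
    simp only [h2]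
    congr 1
    rw [← mul_assoc]
    congr 1
    rw [show ((((l'+1:ℕ)):ℤ) : ℝ[X]) = Polynomial.C ((l'+1:ℕ):ℝ) by push_cast; simp,
      ← Polynomial.C_mul]

theorem aux (n m : ℕ) (hm : 1 ≤ m) : m ≤ n →
    Polynomial.derivative^[m] (T ℝ n) = ∑ l ∈ Finset.range (n - m + 1),
      (if Even (n + l + m) then
        Polynomial.C (((n:ℝ) / c l) * (2 / ((Nat.factorial (m-1) : ℝ) * 2^(m-1))) * pF n (m-1) l)
          * T ℝ l else 0) := by
  induction m, hm using Nat.le_induction with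
  | base =>
    intro hn
    rw [Function.iterate_one, deriv_T_sum n, show n - 1 + 1 = n from by omega]
    apply Finset.sum_congr rfl
    intro l _
    refine if_congr Iff.rfl ?_ rfl
    congr 1
    congr 1
    simp [pF, Nat.factorial]
    ring
  | succ m hm ih =>
    intro hmn
    obtain ⟨m', rfl⟩ : ∃ m'', m = m'' + 1 := ⟨m - 1, by omega⟩
    have hmn' : m' + 1 ≤ n := by omega
    simp only [Nat.add_sub_cancel] at ih ⊢
    rw [Function.iterate_succ_apply', ih hmn', derivative_sum]
    have step1 : ∀ l ∈ Finset.range (n - (m'+1) + 1),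
        derivative (if Even (n + l + (m'+1)) then
            Polynomial.C (((n:ℝ) / c l) * (2 / ((Nat.factorial m' : ℝ) * 2^m')) * pF n m' l)
              * T ℝ l else 0)
        = ∑ k ∈ Finset.range (n - (m'+1) + 1),
            (if Even (n + l + (m'+1)) ∧ Even (l + k + 1) ∧ k < l then
              Polynomial.C (((n:ℝ) / c l) * (2 / ((Nat.factorial m' : ℝ) * 2^m')) * pF n m' l)
                * (Polynomial.C ((l:ℝ) * (2 / c k)) * T ℝ k) else 0) := by
      intro l hl
      rw [apply_ite derivative, derivative_zero, derivative_C_mul, deriv_T_sum l]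
      by_cases hp : Even (n + l + (m'+1))
      · rw [if_pos hp, Finset.mul_sum]
        have hsub : Finset.range l ⊆ Finset.range (n - (m'+1) + 1) := by
          apply Finset.range_subset_range.mpr
          simp at hl; omega
        rw [← Finset.sum_subset hsub]
        · apply Finset.sum_congr rfl
          intro k hk
          simp only [Finset.mem_range] at hk
          rw [mul_ite, mul_zero]
          refine (if_congr ?_ rfl rfl).symm
          constructor
          · rintro ⟨_, h2, _⟩; exact h2
          · intro h2; exact ⟨hp, h2, hk⟩
        · intro k hkmem hknot
          simp only [Finset.mem_range, not_lt] at hknot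
          rw [if_neg]
          rintro ⟨_, _, hkl⟩; omega
      · rw [if_neg hp]
        symm
        apply Finset.sum_eq_zero
        intro k _
        rw [if_neg]
        rintro ⟨h1, _, _⟩; exact hp h1
    rw [Finset.sum_congr rfl step1, Finset.sum_comm]
    have key : ∀ k ∈ Finset.range (n - (m'+1) + 1),
        (∑ l ∈ Finset.range (n - (m'+1) + 1),
          (if Even (n + l + (m'+1)) ∧ Even (l + k + 1) ∧ k < l then
            Polynomial.C (((n:ℝ) / c l) * (2 / ((Nat.factorial m' : ℝ) * 2^m')) * pF n m' l)
              * (Polynomial.C ((l:ℝ) * (2 / c k)) * T ℝ k) else 0))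
        = if Even (n + k + (m'+1+1)) then
            Polynomial.C (((n:ℝ) / c k) * (2 / ((Nat.factorial (m'+1) : ℝ) * 2^(m'+1)))
              * pF n (m'+1) k) * T ℝ k else 0 := by
      intro k hk
      simp only [Finset.mem_range] at hk
      by_cases hq : Even (n + k + (m'+1+1))
      case neg =>
        rw [if_neg hq]
        apply Finset.sum_eq_zero
        intro l _
        rw [if_neg]
        rintro ⟨h1, h2, _⟩
        apply hq
        rw [Nat.even_iff] at h1 h2 ⊢
        omega
      case pos =>
        rw [if_pos hq, ← Finset.sum_filter]
        set t := (n - (m'+1) - k + 1) / 2 with ht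
        have hqm : (n + k + m') % 2 = 0 := by
          rw [Nat.even_iff] at hq; omega
        have himg : (Finset.range (n-(m'+1)+1)).filter
              (fun l => Even (n + l + (m'+1)) ∧ Even (l + k + 1) ∧ k < l)
            = (Finset.range t).image (fun j => k+1+2*j) := by
          ext l
          simp only [Finset.mem_filter, Finset.mem_range, Finset.mem_image, Nat.even_iff]
          constructor
          · rintro ⟨hlr, h1, h2, h3⟩
            exact ⟨(l - k - 1)/2, by omega, by omega⟩
          · rintro ⟨j, hj, rfl⟩
            refine ⟨by omega, by omega, by omega, by omega⟩
        rw [himg, Finset.sum_image (by intro a _ b _ h; simp only at h; omega)]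
        have hterm : ∀ j ∈ Finset.range t,
            (Polynomial.C (((n:ℝ) / c (k+1+2*j)) * (2 / ((Nat.factorial m' : ℝ) * 2^m')) * pF n m' ((k+1+2*j : ℕ) : ℝ))
              * (Polynomial.C (((k+1+2*j : ℕ):ℝ) * (2 / c k)) * T ℝ (k:ℕ)))
            = Polynomial.C ((n:ℝ) * (2 / ((Nat.factorial m' : ℝ) * 2^m')) * (2 / c k)
                * (((k+1+2*j : ℕ):ℝ) * pF n m' ((k+1+2*j : ℕ)))) * T ℝ (k:ℕ) := by
          intro j _
          rw [← mul_assoc, ← Polynomial.C_mul]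
          congr 2
          have hc1 : c (k+1+2*j) = 1 := by simp [c]
          rw [hc1]
          ring
        rw [Finset.sum_congr rfl hterm, ← Finset.sum_mul, ← map_sum, ← Finset.mul_sum]
        have tele : (∑ j ∈ Finset.range t, (((k+1+2*j : ℕ):ℝ)) * pF n m' ((k+1+2*j : ℕ)))
            = pF n (m'+1) k / (4*(m'+1)) := by
          have hterm2 : ∀ j ∈ Finset.range t,
              (((k+1+2*j : ℕ):ℝ)) * pF n m' ((k+1+2*j : ℕ))
              = ((fun j : ℕ => pF n (m'+1) ((k:ℝ)+2*j)) j
                  - (fun j : ℕ => pF n (m'+1) ((k:ℝ)+2*j)) (j+1)) / (4*(m'+1)) := by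
            intro j _
            simp only
            have hd := pF_diff n m' ((k:ℝ) + 1 + 2*(j:ℕ))
            have e1 : ((k:ℝ)+1+2*(j:ℕ)) - 1 = (k:ℝ)+2*(j:ℕ) := by ring
            have e2 : ((k:ℝ)+1+2*(j:ℕ)) + 1 = (k:ℝ)+2*((j:ℕ):ℝ)+2 := by ring
            rw [e1, e2] at hd
            have h4 : (4*((m':ℝ)+1)) ≠ 0 := by positivity
            rw [eq_div_iff h4]
            have e3 : ((k:ℝ)+2*((j+1:ℕ):ℝ)) = (k:ℝ)+2*((j:ℕ):ℝ)+2 := by push_cast; ring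
            rw [e3]
            have e4 : (((k+1+2*j : ℕ):ℕ):ℝ) = (k:ℝ)+1+2*(j:ℕ) := by push_cast; ring
            rw [e4]
            linear_combination -hd
          rw [Finset.sum_congr rfl hterm2, ← Finset.sum_div,
            Finset.sum_range_sub' (f := fun j : ℕ => pF n (m'+1) ((k:ℝ)+2*j)) t]
          have hzero : pF n (m'+1) ((k:ℝ) + 2*((t:ℕ):ℝ)) = 0 := by
            have h2t : k + 2*t = n - (m'+1) + 1 := by omega
            have hcast : ((k:ℝ) + 2*((t:ℕ):ℝ)) = ((n:ℝ) - ((m'+1:ℕ):ℝ) + 1) := by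
              have := congrArg (Nat.cast : ℕ → ℝ) h2t
              push_cast [Nat.cast_sub hmn'] at this ⊢
              linarith
            rw [hcast]
            push_cast
            have := pF_top n (m'+1) (by omega)
            push_cast at this
            convert this using 2
          rw [hzero]
          norm_num
        rw [tele]
        congr 2
        have h1 : (Nat.factorial (m'+1) : ℝ) = (m'+1) * (Nat.factorial m') := by
          rw [Nat.factorial_succ]; push_cast; ring
        rw [h1]
        have hck : c k ≠ 0 := by unfold c; split <;> norm_num
        have hfz : (Nat.factorial m' : ℝ) ≠ 0 := Nat.cast_ne_zero.mpr (Nat.factorial_ne_zero m')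
        field_simp
        ring
    rw [Finset.sum_congr rfl key,
      show n - (m'+1) + 1 = (n - (m'+1+1) + 1) + 1 from by omega,
      Finset.sum_range_succ, if_neg (by rw [Nat.even_iff]; omega), add_zero]

end Aux

theorem chebyshev_deriv_general (m n : ℕ) (hm : 1 ≤ m) (hnm : m ≤ n) :
    Polynomial.derivative^[m] (T ℝ n) =
      ∑ l ∈ (Finset.range (n - m + 1)).filter (fun l => Even (n + l + m)),
        Polynomial.C (((n : ℝ) / c l) * (2 / ((Nat.factorial (m - 1) : ℝ) * 2 ^ (m - 1)))
          * ∏ j ∈ Finset.range (m - 1),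
              ((n : ℝ) ^ 2 - ((l : ℝ) + ((2 : ℝ) - (m : ℝ) + 2 * (j : ℝ))) ^ 2)) * T ℝ l := by
  rw [Finset.sum_filter, aux n m hm hnm]
  apply Finset.sum_congr rfl
  intro l _
  congr 3
  unfold pF
  refine congrArg _ (Finset.prod_congr rfl ?_)
  intro j _
  have hc : ((m - 1 : ℕ) : ℝ) = (m : ℝ) - 1 := by
    have := Nat.cast_sub (R := ℝ) hm; push_cast at this ⊢; linarith
  rw [hc]
  ring_nf
end
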